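/- Innermost lifting lemma: Let R be a rewrite system, s ∈ T(F,X), α a ground substitution such that αs is innermost-reducible at a non-variable position p of s, and Y ⊆ X a set of variables with Var(s) ∪ Dom(α) ⊆ Y. If αs rewrites innermost at position p with rule l→r to t', then there exist a term s' ∈ T(F,X) and substitutions β and σ = σ0 ∧ ⋀_{j=1..k} ¬σ_j such that: (1) s innermost-narrows to s' at position p with rule l→r and constrained substitution σ; (2) βs' = t'; (3) βσ0 = α on Y; and (4) β satisfies ⋀_{j=1..k} ¬σ_j; where σ0 is the most general unifier of s|_p and l and σ_1,…,σ_k are all most general unifiers of σ0(s|_{p'}) with a left-hand side of a rule of R, for all positions p' of s that are strict suffixes of p. -/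

import Mathlib

namespace TRS

inductive Term (F V : Type*) where
  | var : V → Term F V
  | app : F → List (Term F V) → Term F V

namespace Term

variable {F V : Type*}

mutual
  def subst (σ : V → Term F V) : Term F V → Term F V
    | .var x => σ x
    | .app f ts => .app f (substList σ ts)

  def substList (σ : V → Term F V) : List (Term F V) → List (Term F V)
    | [] => []
    | t :: ts => subst σ t :: substList σ ts
end

mutual
  def vars : Term F V → Set V
    | .var x => {x}
    | .app _ ts => varsList ts

  def varsList : List (Term F V) → Set V
    | [] => ∅
    | t :: ts => vars t ∪ varsList ts
end

def IsGround (t : Term F V) : Prop := vars t = ∅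

def top : Term F V → Option F
  | .var _ => none
  | .app f _ => some f

def subtermAt : List ℕ → Term F V → Option (Term F V)
  | [], t => some t
  | _ :: _, .var _ => none
  | i :: p, .app _ ts =>
    match ts[i]? with
    | none => none
    | some u => subtermAt p u

def replaceAt : List ℕ → Term F V → Term F V → Option (Term F V)
  | [], _, u => some u
  | _ :: _, .var _, _ => none
  | i :: p, .app f ts, u =>
    match ts[i]? with
    | none => none
    | some ti =>
      match replaceAt p ti u with
      | none => none
      | some ti' => some (.app f (ts.set i ti'))

inductive WF (arity : F → ℕ) : Term F V → Prop
  | var (x : V) : WF arity (.var x)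
  | app (f : F) (ts : List (Term F V)) :
      ts.length = arity f → (∀ t ∈ ts, WF arity t) → WF arity (.app f ts)

inductive Occurs (f : F) : Term F V → Prop
  | head (ts : List (Term F V)) : Occurs f (.app f ts)
  | arg {g : F} {ts : List (Term F V)} {t : Term F V} :
      t ∈ ts → Occurs f t → Occurs f (.app g ts)

end Term

open Term

structure Rule (F V : Type*) where
  lhs : Term F V
  rhs : Term F V

variable {F V : Type*}

/-- The domain of a substitution. -/
def SDom (σ : V → Term F V) : Set V := {x | σ x ≠ Term.var x}

/-- The range (variables) of a substitution. -/
def SRan (σ : V → Term F V) : Set V := ⋃ x ∈ SDom σ, vars (σ x)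

/-- A ground substitution maps every variable of its domain to a ground term. -/
def GroundSubst (σ : V → Term F V) : Prop := ∀ x ∈ SDom σ, IsGround (σ x)

/-- `R` is a rewrite system: no left-hand side is a variable, and
`Var(rhs) ⊆ Var(lhs)` for every rule. -/
def IsRS (R : List (Rule F V)) : Prop :=
  ∀ ρ ∈ R, (∀ x : V, ρ.lhs ≠ Term.var x) ∧ vars ρ.rhs ⊆ vars ρ.lhs

/-- Rewriting at position `p` with the rule `l → r`. -/
def RewriteAtWith (l r : Term F V) (p : List ℕ) (s t : Term F V) : Prop :=
  ∃ τ : V → Term F V, subtermAt p s = some (subst τ l) ∧ replaceAt p s (subst τ r) = some t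

/-- Rewriting at position `p` with some rule of `R`. -/
def RewriteAt (R : List (Rule F V)) (p : List ℕ) (s t : Term F V) : Prop :=
  ∃ ρ ∈ R, RewriteAtWith ρ.lhs ρ.rhs p s t

/-- The rewriting relation induced by `R`. -/
def Rewrite (R : List (Rule F V)) (s t : Term F V) : Prop :=
  ∃ p, RewriteAt R p s t

def ReducibleAt (R : List (Rule F V)) (s : Term F V) (p : List ℕ) : Prop :=
  ∃ t, RewriteAt R p s t

def Reducible (R : List (Rule F V)) (s : Term F V) : Prop :=
  ∃ t, Rewrite R s t

def NormalForm (R : List (Rule F V)) (s : Term F V) : Prop := ¬ Reducible R s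

/-- `n` is a normal form of `s`. -/
def IsNormalFormOf (R : List (Rule F V)) (s n : Term F V) : Prop :=
  Relation.ReflTransGen (Rewrite R) s n ∧ NormalForm R n

/-- `q` is strictly below `p` (`p` is a strict prefix of `q`). -/
def StrictBelow (p q : List ℕ) : Prop := p <+: q ∧ p ≠ q

/-- Innermost rewrite step at position `p`. -/
def InnAt (R : List (Rule F V)) (p : List ℕ) (s t : Term F V) : Prop :=
  RewriteAt R p s t ∧ ∀ q, StrictBelow p q → ¬ ReducibleAt R s q

def InnStep (R : List (Rule F V)) (s t : Term F V) : Prop := ∃ p, InnAt R p s t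

/-- Outermost rewrite step at position `p`. -/
def OutAt (R : List (Rule F V)) (p : List ℕ) (s t : Term F V) : Prop :=
  RewriteAt R p s t ∧ ∀ q, StrictBelow q p → ¬ ReducibleAt R s q

def OutStep (R : List (Rule F V)) (s t : Term F V) : Prop := ∃ p, OutAt R p s t

/-- Innermost rewrite step at position `p` with rule `l → r`. -/
def InnAtWith (R : List (Rule F V)) (l r : Term F V) (p : List ℕ) (s t : Term F V) : Prop :=
  RewriteAtWith l r p s t ∧ ∀ q, StrictBelow p q → ¬ ReducibleAt R s q

/-- Outermost rewrite step at position `p` with rule `l → r`. -/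
def OutAtWith (R : List (Rule F V)) (l r : Term F V) (p : List ℕ) (s t : Term F V) : Prop :=
  RewriteAtWith l r p s t ∧ ∀ q, StrictBelow q p → ¬ ReducibleAt R s q

/-- No infinite innermost derivation starts from `t`. -/
def InnTerminates (R : List (Rule F V)) (t : Term F V) : Prop :=
  ¬ ∃ f : ℕ → Term F V, f 0 = t ∧ ∀ n, InnStep R (f n) (f (n + 1))

/-- No infinite outermost derivation starts from `t`. -/
def OutTerminates (R : List (Rule F V)) (t : Term F V) : Prop :=
  ¬ ∃ f : ℕ → Term F V, f 0 = t ∧ ∀ n, OutStep R (f n) (f (n + 1))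

def Unifies (σ : V → Term F V) (u v : Term F V) : Prop := subst σ u = subst σ v

/-- `σ` is a most general unifier of `u` and `v`. -/
def IsMGU (u v : Term F V) (σ : V → Term F V) : Prop :=
  Unifies σ u v ∧
    ∀ τ : V → Term F V, Unifies τ u v → ∃ ρ : V → Term F V, ∀ x, subst ρ (σ x) = τ x

/-- The usable rules of a term (least set closed under the defining equations). -/
inductive Usable (R : List (Rule F V)) (XA : Set V) : Term F V → Rule F V → Prop
  | var {x : V} {ρ : Rule F V} : x ∉ XA → ρ ∈ R → Usable R XA (Term.var x) ρ
  | rls {f : F} {ts : List (Term F V)} {ρ : Rule F V} :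
      ρ ∈ R → Term.top ρ.lhs = some f → Usable R XA (Term.app f ts) ρ
  | arg {f : F} {ts : List (Term F V)} {t : Term F V} {ρ : Rule F V} :
      t ∈ ts → Usable R XA t ρ → Usable R XA (Term.app f ts) ρ
  | rhs {f : F} {ts : List (Term F V)} {ρ' ρ : Rule F V} :
      ρ' ∈ R → Term.top ρ'.lhs = some f → Usable R XA ρ'.rhs ρ → Usable R XA (Term.app f ts) ρ

/-! ### Auxiliary lemmas -/

section Aux

mutual
theorem subst_subst (β σ : V → Term F V) : (t : Term F V) →
    subst β (subst σ t) = subst (fun x => subst β (σ x)) t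
  | .var _ => rfl
  | .app f ts => by
    simp only [subst, substList_subst β σ ts]
theorem substList_subst (β σ : V → Term F V) : (ts : List (Term F V)) →
    substList β (substList σ ts) = substList (fun x => subst β (σ x)) ts
  | [] => rfl
  | t :: ts => by
    simp only [substList, subst_subst β σ t, substList_subst β σ ts]
end

mutual
theorem subst_congr (σ τ : V → Term F V) : (t : Term F V) →
    (∀ x ∈ vars t, σ x = τ x) → subst σ t = subst τ t
  | .var x, h => h x rfl
  | .app f ts, h => by
    simp only [subst, substList_congr σ τ ts h]
theorem substList_congr (σ τ : V → Term F V) : (ts : List (Term F V)) →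
    (∀ x ∈ varsList ts, σ x = τ x) → substList σ ts = substList τ ts
  | [], _ => rfl
  | t :: ts, h => by
    simp only [substList,
      subst_congr σ τ t (fun x hx => h x (Or.inl hx)),
      substList_congr σ τ ts (fun x hx => h x (Or.inr hx))]
end

mutual
theorem subst_id : (t : Term F V) → subst (fun y => Term.var y) t = t
  | .var _ => rfl
  | .app f ts => by simp only [subst, substList_id ts]
theorem substList_id : (ts : List (Term F V)) → substList (fun y => Term.var y) ts = ts
  | [] => rfl
  | t :: ts => by simp only [substList, subst_id t, substList_id ts]
end

theorem substList_eq_map (σ : V → Term F V) (ts : List (Term F V)) :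
    substList σ ts = ts.map (subst σ) := by
  induction ts with
  | nil => rfl
  | cons t ts ih => simp [substList, ih]

mutual
def size : Term F V → ℕ
  | .var _ => 1
  | .app _ ts => 1 + sizeList ts
def sizeList : List (Term F V) → ℕ
  | [] => 0
  | t :: ts => size t + sizeList ts
end

theorem size_pos : (t : Term F V) → 1 ≤ size t
  | .var _ => le_refl _
  | .app _ _ => by simp [size]

mutual
theorem le_size_subst (μ : V → Term F V) (x : V) : (t : Term F V) →
    x ∈ vars t → size (μ x) ≤ size (subst μ t)
  | .var y, h => by
    obtain rfl : x = y := h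
    exact le_refl _
  | .app f ts, h => by
    have := le_sizeList_substList μ x ts h
    simp only [subst, size]
    omega
theorem le_sizeList_substList (μ : V → Term F V) (x : V) : (ts : List (Term F V)) →
    x ∈ varsList ts → size (μ x) ≤ sizeList (substList μ ts)
  | [], h => absurd h (fun h => h)
  | t :: ts, h => by
    have hs : sizeList (substList μ (t :: ts)) = size (subst μ t) + sizeList (substList μ ts) :=
      rfl
    rcases h with h | h
    · have := le_size_subst μ x t h
      omega
    · have := le_sizeList_substList μ x ts h
      omega
end

theorem occurs_ne (μ : V → Term F V) (x : V) (f : F) (ts : List (Term F V))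
    (hx : x ∈ varsList ts) : μ x ≠ subst μ (.app f ts) := by
  intro h
  have h1 := le_sizeList_substList μ x ts hx
  have h2 : size (μ x) = 1 + sizeList (substList μ ts) := by rw [h]; rfl
  omega

theorem subtermAt_subst (σ : V → Term F V) :
    ∀ (p : List ℕ) (s u : Term F V), subtermAt p s = some u →
      subtermAt p (subst σ s) = some (subst σ u)
  | [], s, u, h => by
    simp only [subtermAt] at h ⊢
    obtain rfl := Option.some.inj h
    rfl
  | i :: p, .var _, u, h => by simp [subtermAt] at h
  | i :: p, .app f ts, u, h => by
    simp only [subtermAt] at h ⊢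
    cases hti : ts[i]? with
    | none => rw [hti] at h; simp at h
    | some ti =>
      rw [hti] at h
      simp only [subst, substList_eq_map]
      have : (ts.map (subst σ))[i]? = some (subst σ ti) := by
        rw [List.getElem?_map, hti]; rfl
      rw [subtermAt, this]
      exact subtermAt_subst σ p ti u h

theorem vars_mem_subset {t : Term F V} {ts : List (Term F V)} (h : t ∈ ts) :
    vars t ⊆ varsList ts := by
  induction ts with
  | nil => simp at h
  | cons a ts ih =>
    cases h with
    | head => exact fun x hx => Or.inl hx
    | tail _ h => exact fun x hx => Or.inr (ih h hx)

theorem vars_subtermAt :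
    ∀ (p : List ℕ) (s u : Term F V), subtermAt p s = some u → vars u ⊆ vars s
  | [], s, u, h => by
    obtain rfl := Option.some.inj h
    exact le_refl _
  | i :: p, .var _, u, h => by simp [subtermAt] at h
  | i :: p, .app f ts, u, h => by
    simp only [subtermAt] at h
    cases hti : ts[i]? with
    | none => rw [hti] at h; simp at h
    | some ti =>
      rw [hti] at h
      have h1 := vars_subtermAt p ti u h
      have h2 : ti ∈ ts := List.mem_of_getElem? hti
      exact h1.trans (vars_mem_subset h2)

theorem replaceAt_exists :
    ∀ (p : List ℕ) (s u v : Term F V), subtermAt p s = some u →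
      ∃ w, replaceAt p s v = some w
  | [], s, u, v, _ => ⟨v, rfl⟩
  | i :: p, .var _, u, v, h => by simp [subtermAt] at h
  | i :: p, .app f ts, u, v, h => by
    simp only [subtermAt] at h
    cases hti : ts[i]? with
    | none => rw [hti] at h; simp at h
    | some ti =>
      rw [hti] at h
      obtain ⟨w, hw⟩ := replaceAt_exists p ti u v h
      exact ⟨.app f (ts.set i w), by simp only [replaceAt, hti, hw]⟩

theorem replaceAt_subst (σ : V → Term F V) :
    ∀ (p : List ℕ) (s v w : Term F V), replaceAt p s v = some w →
      replaceAt p (subst σ s) (subst σ v) = some (subst σ w)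
  | [], s, v, w, h => by
    obtain rfl := Option.some.inj h
    rfl
  | i :: p, .var _, v, w, h => by simp [replaceAt] at h
  | i :: p, .app f ts, v, w, h => by
    simp only [replaceAt] at h
    split at h
    · exact nomatch h
    next ti hti =>
      split at h
      · exact nomatch h
      next ti' hri =>
        obtain rfl := Option.some.inj h
        simp only [subst, substList_eq_map, replaceAt]
        have h1 : (ts.map (subst σ))[i]? = some (subst σ ti) := by
          rw [List.getElem?_map, hti]; rfl
        rw [h1]
        show (match replaceAt p (subst σ ti) (subst σ v) with
          | none => none
          | some ti' => some (Term.app f ((List.map (subst σ) ts).set i ti'))) = _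
        rw [replaceAt_subst σ p ti v ti' hri]
        simp [List.map_set]

/-! ### Existence of most general unifiers -/

def UnifiesList (σ : V → Term F V) (ts us : List (Term F V)) : Prop :=
  substList σ ts = substList σ us

def IsMGUList (ts us : List (Term F V)) (σ : V → Term F V) : Prop :=
  UnifiesList σ ts us ∧
    ∀ τ : V → Term F V, UnifiesList τ ts us → ∃ ρ : V → Term F V, ∀ x, subst ρ (σ x) = τ x

theorem isMGU_id_self (t : Term F V) : IsMGU t t (fun y => Term.var y) :=
  ⟨rfl, fun τ _ => ⟨τ, fun _ => rfl⟩⟩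

theorem isMGU_binding (x : V) (v : Term F V) (hx : x ∉ vars v) :
    ∃ σ0, IsMGU (Term.var x) v σ0 := by
  classical
  refine ⟨fun y => if y = x then v else Term.var y, ?_, ?_⟩
  · show subst _ (Term.var x) = subst _ v
    have h1 : subst (fun y => if y = x then v else Term.var y) (Term.var x) = v := by
      show (if x = x then v else Term.var x) = v
      simp
    have h2 : subst (fun y => if y = x then v else Term.var y) v = v := by
      rw [subst_congr _ (fun y => Term.var y) v ?_, subst_id]
      intro y hy
      have hne : y ≠ x := fun h => hx (h ▸ hy)
      simp [hne]
    rw [h1, h2]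
  · intro τ hτ
    refine ⟨τ, fun y => ?_⟩
    by_cases h : y = x
    · subst h
      simp only [if_pos rfl]
      exact hτ.symm
    · simp only [if_neg h]
      rfl

theorem isMGU_symm {u v : Term F V} {σ : V → Term F V} (h : IsMGU u v σ) : IsMGU v u σ :=
  ⟨h.1.symm, fun τ hτ => h.2 τ hτ.symm⟩

theorem isMGU_var_cases (x : V) (v : Term F V) (μ : V → Term F V)
    (h : μ x = subst μ v) : ∃ σ0, IsMGU (Term.var x) v σ0 := by
  classical
  cases v with
  | var y =>
    by_cases hxy : y = x
    · subst hxy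
      exact ⟨fun y => Term.var y, isMGU_id_self _⟩
    · exact isMGU_binding x (Term.var y) (fun h => hxy ((show x = y from h).symm))
  | app f ts =>
    by_cases hx : x ∈ varsList ts
    · exact absurd h (occurs_ne μ x f ts hx)
    · exact isMGU_binding x (Term.app f ts) hx

theorem mgu_exists_aux : ∀ N : ℕ,
    (∀ (u v : Term F V) (μ : V → Term F V), size (subst μ u) ≤ N →
      subst μ u = subst μ v → ∃ σ0, IsMGU u v σ0) ∧
    (∀ (ts us : List (Term F V)) (μ : V → Term F V), sizeList (substList μ ts) ≤ N →
      substList μ ts = substList μ us → ∃ σ0, IsMGUList ts us σ0) := by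
  intro N
  induction N using Nat.strong_induction_on with
  | _ N IH =>
    have hterm : ∀ (u v : Term F V) (μ : V → Term F V), size (subst μ u) ≤ N →
        subst μ u = subst μ v → ∃ σ0, IsMGU u v σ0 := by
      intro u v μ hsize hμ
      cases u with
      | var x => exact isMGU_var_cases x v μ hμ
      | app f ts =>
        cases v with
        | var y =>
          obtain ⟨σ0, hσ0⟩ := isMGU_var_cases y (Term.app f ts) μ hμ.symm
          exact ⟨σ0, isMGU_symm hσ0⟩
        | app g us =>
          simp only [subst, Term.app.injEq] at hμ
          obtain ⟨rfl, hμl⟩ := hμ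
          have hN : 1 ≤ N := le_trans (size_pos _) hsize
          have hsz : sizeList (substList μ ts) ≤ N - 1 := by
            have : size (subst μ (Term.app f ts)) = 1 + sizeList (substList μ ts) := rfl
            omega
          obtain ⟨σ0, hσ0⟩ := (IH (N - 1) (by omega)).2 ts us μ hsz hμl
          refine ⟨σ0, ?_, ?_⟩
          · show subst σ0 (Term.app f ts) = subst σ0 (Term.app f us)
            simp only [subst]
            exact congrArg (Term.app f) hσ0.1
          · intro τ hτ
            apply hσ0.2
            have : Term.app f (substList τ ts) = Term.app f (substList τ us) := hτ
            exact (Term.app.injEq _ _ _ _).mp this |>.2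
    refine ⟨hterm, ?_⟩
    intro ts us μ hsize hμ
    cases ts with
    | nil =>
      cases us with
      | nil => exact ⟨fun y => Term.var y, rfl, fun τ _ => ⟨τ, fun _ => rfl⟩⟩
      | cons u us => simp [substList] at hμ
    | cons t ts =>
      cases us with
      | nil => simp [substList] at hμ
      | cons u us =>
        simp only [substList, List.cons.injEq] at hμ
        obtain ⟨hμh, hμt⟩ := hμ
        have hsz : sizeList (substList μ (t :: ts)) =
            size (subst μ t) + sizeList (substList μ ts) := rfl
        have h1 : size (subst μ t) ≤ N := by omega
        obtain ⟨σ1, hσ1⟩ := hterm t u μ h1 hμh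
        obtain ⟨ρ1, hρ1⟩ := hσ1.2 μ hμh
        have hcompts : substList ρ1 (substList σ1 ts) = substList μ ts := by
          rw [substList_subst]
          exact substList_congr _ μ ts (fun x _ => hρ1 x)
        have hcompus : substList ρ1 (substList σ1 us) = substList μ us := by
          rw [substList_subst]
          exact substList_congr _ μ us (fun x _ => hρ1 x)
        have hpos := size_pos (subst μ t)
        have h2 : sizeList (substList ρ1 (substList σ1 ts)) ≤ N - 1 := by
          rw [hcompts]; omega
        obtain ⟨σ2, hσ2⟩ := (IH (N - 1) (by omega)).2 (substList σ1 ts) (substList σ1 us) ρ1 h2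
          (by rw [hcompts, hcompus, hμt])
        refine ⟨fun x => subst σ2 (σ1 x), ?_, ?_⟩
        · show substList _ (t :: ts) = substList _ (u :: us)
          simp only [substList]
          have hh : subst (fun x => subst σ2 (σ1 x)) t = subst (fun x => subst σ2 (σ1 x)) u := by
            rw [← subst_subst, ← subst_subst, hσ1.1]
          have ht : substList (fun x => subst σ2 (σ1 x)) ts =
              substList (fun x => subst σ2 (σ1 x)) us := by
            rw [← substList_subst, ← substList_subst, hσ2.1]
          rw [hh, ht]
        · intro τ hτ
          have hτc : substList τ (t :: ts) = substList τ (u :: us) := hτ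
          simp only [substList, List.cons.injEq] at hτc
          obtain ⟨ρ, hρ⟩ := hσ1.2 τ hτc.1
          have : UnifiesList ρ (substList σ1 ts) (substList σ1 us) := by
            show substList ρ (substList σ1 ts) = substList ρ (substList σ1 us)
            rw [substList_subst, substList_subst,
              substList_congr _ τ ts (fun x _ => hρ x),
              substList_congr _ τ us (fun x _ => hρ x)]
            exact hτc.2
          obtain ⟨ρ2, hρ2⟩ := hσ2.2 ρ this
          refine ⟨ρ2, fun x => ?_⟩
          rw [subst_subst]
          rw [subst_congr _ ρ (σ1 x) (fun y _ => hρ2 y)]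
          exact hρ x

theorem mgu_exists (u v : Term F V) (μ : V → Term F V) (h : subst μ u = subst μ v) :
    ∃ σ0, IsMGU u v σ0 :=
  (mgu_exists_aux (size (subst μ u))).1 u v μ (le_refl _) h

end Aux

/-- innermost lifting lemma.
If `αs` rewrites innermost at the non-variable position `p` of `s` with rule `l→r` to `t'`,
then `s` innermost-narrows at `p` with `l→r` and a constrained substitution
`σ = σ₀ ∧ ⋀_j ¬σ_j` into some `s'`, and there is a `β` with `βs' = t'`, `βσ₀ = α` on `Y`,
and `β` satisfies every `¬σ_j`, where the `σ_j` range over all most general unifiers of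
`σ₀(s|_{p'})` with a (renamed, variable-disjoint) left-hand side of a rule of `R`,
for all positions `p'` of `s` that are strict suffixes of `p`. -/
theorem innermost_lifting {F V : Type*}
    (R : List (Rule F V)) (hRS : IsRS R)
    (s : Term F V) (α : V → Term F V) (hα : GroundSubst α)
    (Y : Set V) (hYs : vars s ⊆ Y) (hYd : SDom α ⊆ Y)
    -- the variables of the rules are renamed away from `Y`
    (hYR : ∀ ρ ∈ R, ∀ x ∈ vars ρ.lhs, x ∉ Y)
    (l r : Term F V) (hrule : (⟨l, r⟩ : Rule F V) ∈ R)
    (p : List ℕ) (sp : Term F V)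
    (hsp : subtermAt p s = some sp) (hnv : ∀ x : V, sp ≠ Term.var x)
    (t' : Term F V)
    -- `αs` rewrites innermost at position `p` with rule `l→r` to `t'`
    (hstep : RewriteAtWith l r p (subst α s) t')
    (hinn : ∀ q, StrictBelow p q → ¬ ReducibleAt R (subst α s) q) :
    ∃ (s' : Term F V) (β σ0 : V → Term F V),
      -- (1) `s` innermost-narrows to `s'` at `p` with rule `l→r` and mgu `σ₀`
      (IsMGU sp l σ0 ∧ ∃ w, replaceAt p s r = some w ∧ s' = subst σ0 w) ∧
      -- (2) `βs' = t'`
      subst β s' = t' ∧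
      -- (3) `βσ₀ = α` on `Y`
      (∀ x ∈ Y, subst β (σ0 x) = α x) ∧
      -- (4) `β` satisfies `¬σ_j` for every mgu `σ_j` of `σ₀(s|_{p'})` with a renamed
      -- left-hand side of a rule of `R`, `p'` a strict suffix position of `p` in `s`
      (∀ p' : List ℕ, StrictBelow p p' → ∀ sp', subtermAt p' s = some sp' →
        ∀ ρ' ∈ R, ∀ ξ : V → V, Function.Injective ξ →
          (∀ x ∈ vars (subst (fun y => Term.var (ξ y)) ρ'.lhs),
              x ∉ Y ∧ x ∉ vars (subst σ0 sp')) →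
          ∀ ν : V → Term F V,
            IsMGU (subst σ0 sp') (subst (fun y => Term.var (ξ y)) ρ'.lhs) ν →
            ∃ x : V, β x ≠ subst β (ν x)) := by
  classical
  obtain ⟨τ, hτsub, hτrep⟩ := hstep
  have hαsp : subtermAt p (subst α s) = some (subst α sp) := subtermAt_subst α p s sp hsp
  have heq : subst α sp = subst τ l := Option.some.inj (hαsp.symm.trans hτsub)
  set μ : V → Term F V := fun x => if x ∈ Y then α x else τ x with hμdef
  have hμY : ∀ x ∈ Y, μ x = α x := fun x hx => if_pos hx
  have hμnY : ∀ x, x ∉ Y → μ x = τ x := fun x hx => if_neg hx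
  have hμl : ∀ x ∈ vars l, μ x = τ x := fun x hx => hμnY x (hYR ⟨l, r⟩ hrule x hx)
  have hvsp : vars sp ⊆ Y := (vars_subtermAt p s sp hsp).trans hYs
  have hμunif : subst μ sp = subst μ l := by
    rw [subst_congr μ α sp (fun x hx => hμY x (hvsp hx)),
        subst_congr μ τ l hμl, heq]
  obtain ⟨σ0, hσ0⟩ := mgu_exists sp l μ hμunif
  obtain ⟨β, hβ⟩ := hσ0.2 μ hμunif
  obtain ⟨w, hw⟩ := replaceAt_exists p s sp r hsp
  refine ⟨subst σ0 w, β, σ0, ⟨hσ0, w, hw, rfl⟩, ?_, ?_, ?_⟩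
  · have h1 : subst β (subst σ0 w) = subst μ w := by
      rw [subst_subst]
      exact subst_congr _ μ w (fun x _ => hβ x)
    have h2 := replaceAt_subst μ p s r w hw
    have h3 : subst μ s = subst α s := subst_congr μ α s (fun x hx => hμY x (hYs hx))
    have h4 : subst μ r = subst τ r :=
      subst_congr μ τ r (fun x hx => hμl x ((hRS ⟨l, r⟩ hrule).2 hx))
    rw [h3, h4] at h2
    rw [h1]
    exact Option.some.inj (h2.symm.trans hτrep)
  · intro x hx
    rw [hβ x, hμY x hx]
  · intro p' hp' sp' hsp' ρ' hρ' ξ hξ hvarsξ ν hν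
    by_contra hcon
    push_neg at hcon
    apply hinn p' hp'
    have hαsp' : subtermAt p' (subst α s) = some (subst α sp') :=
      subtermAt_subst α p' s sp' hsp'
    have key : subst α sp' = subst (fun y => subst β (ν (ξ y))) ρ'.lhs := by
      have e1 : subst α sp' = subst β (subst σ0 sp') := by
        rw [subst_subst]
        refine (subst_congr _ _ sp' ?_).symm
        intro x hx
        rw [hβ x, hμY x (((vars_subtermAt p' s sp' hsp').trans hYs) hx)]
      have e2 : subst β (subst ν (subst σ0 sp')) = subst β (subst σ0 sp') := by
        rw [subst_subst β ν]
        exact subst_congr _ β _ (fun x _ => (hcon x).symm)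
      have e3 : subst ν (subst σ0 sp') = subst ν (subst (fun y => Term.var (ξ y)) ρ'.lhs) :=
        hν.1
      have e4 : subst β (subst ν (subst (fun y => Term.var (ξ y)) ρ'.lhs)) =
          subst (fun y => subst β (ν (ξ y))) ρ'.lhs := by
        rw [subst_subst ν, subst_subst β]
        exact subst_congr _ _ ρ'.lhs (fun y _ => rfl)
      rw [e1, ← e2, e3, e4]
    rw [key] at hαsp'
    obtain ⟨w', hw'⟩ := replaceAt_exists p' (subst α s) _
      (subst (fun y => subst β (ν (ξ y))) ρ'.rhs) hαsp'
    exact ⟨w', ρ', hρ', fun y => subst β (ν (ξ y)), hαsp', hw'⟩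

end TRS
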